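/- The flat tetrahedrons tile the hyperplane without overlap: if a,b ∈ ℤ⁴, i,j,k are pairwise distinct, p,q,r are pairwise distinct, and π(T(a;i,j,k)) ≠ π(T(b;p,q,r)) as sets, then the relative interiors of π(T(a;i,j,k)) and π(T(b;p,q,r)) (i.e. their interiors within the 3-dimensional hyperplane H) are disjoint. -/

import Mathlib

noncomputable section

/-- Ambient space ℝ⁴. -/
abbrev E4 := EuclideanSpace ℝ (Fin 4)

/-- Standard basis vector eᵢ of ℝ⁴. -/
def ee4 (i : Fin 4) : E4 := EuclideanSpace.single i 1

/-- 𝟙 = e₁ + e₂ + e₃ + e₄. -/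
def ones4 : E4 := ∑ i, ee4 i

/-- Orthogonal projection π onto the hyperplane H = {v ∈ ℝ⁴ : v₁+v₂+v₃+v₄ = 0},
    given by π(v) = v − ((v₁+v₂+v₃+v₄)/4)·𝟙. -/
def proj4 (v : E4) : E4 := v - ((∑ i, v i) / 4) • ones4

/-- A lattice point of ℤ⁴ viewed in ℝ⁴. -/
def toE4 (a : Fin 4 → ℤ) : E4 := WithLp.toLp 2 (fun n => (a n : ℝ))

/-- Slant tetrahedron T(a;i,j,k) = conv{a, a+eᵢ, a+eᵢ+eⱼ, a+eᵢ+eⱼ+e_k}. -/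
def slant4 (a : Fin 4 → ℤ) (i j k : Fin 4) : Set E4 :=
  convexHull ℝ {toE4 a, toE4 a + ee4 i, toE4 a + ee4 i + ee4 j,
    toE4 a + ee4 i + ee4 j + ee4 k}

/-- Flat tetrahedron: the image π(T(a;i,j,k)). -/
def flat4 (a : Fin 4 → ℤ) (i j k : Fin 4) : Set E4 := proj4 '' slant4 a i j k

lemma ee4_apply (i m : Fin 4) : ee4 i m = if m = i then 1 else 0 := by
  simp [ee4, EuclideanSpace.single_apply]

lemma ones4_apply (m : Fin 4) : ones4 m = 1 := by
  have h : ones4 m = ∑ i : Fin 4, ee4 i m := by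
    rw [ones4, WithLp.ofLp_sum, Finset.sum_apply]
  rw [h]
  simp [ee4_apply]

lemma proj4_diff (v : E4) (m n : Fin 4) : proj4 v m - proj4 v n = v m - v n := by
  simp [proj4, PiLp.sub_apply, PiLp.smul_apply, ones4_apply]

def Lproj : E4 →ₗ[ℝ] E4 where
  toFun := proj4
  map_add' x y := by
    simp only [proj4, PiLp.add_apply, Finset.sum_add_distrib]
    module
  map_smul' c x := by
    simp only [proj4, PiLp.smul_apply, smul_eq_mul, ← Finset.mul_sum, RingHom.id_apply]
    module

lemma proj4_shift (v : E4) (c : ℝ) : proj4 (v + c • ones4) = proj4 v := by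
  have hs : (∑ i, (v + c • ones4) i) = (∑ i, v i) + 4 * c := by
    simp [PiLp.add_apply, PiLp.smul_apply, ones4_apply, Finset.sum_add_distrib]

  rw [proj4, hs, proj4]
  module


lemma flat4_eq_hull (a : Fin 4 → ℤ) (i j k : Fin 4) :
    flat4 a i j k = convexHull ℝ {proj4 (toE4 a), proj4 (toE4 a + ee4 i),
      proj4 (toE4 a + ee4 i + ee4 j), proj4 (toE4 a + ee4 i + ee4 j + ee4 k)} := by
  have h := Lproj.image_convexHull
    ({toE4 a, toE4 a + ee4 i, toE4 a + ee4 i + ee4 j,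
      toE4 a + ee4 i + ee4 j + ee4 k} : Set E4)
  have hl : ⇑Lproj = proj4 := rfl
  rw [flat4, slant4, ← hl, h, hl]
  simp [Set.image_insert_eq]

lemma convex_cd (m n : Fin 4) (c : ℝ) : Convex ℝ {x : E4 | x m - x n ≤ c} :=
  convex_halfSpace_le
    ⟨fun u v => by simp [PiLp.add_apply]; ring,
     fun t u => by simp [PiLp.smul_apply]; ring⟩ c

lemma mem_flat4_ineq {a : Fin 4 → ℤ} {i j k l : Fin 4}
    (hij : i ≠ j) (hik : i ≠ k) (hil : i ≠ l) (hjk : j ≠ k) (hjl : j ≠ l) (hkl : k ≠ l)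
    {x : E4} (hx : x ∈ flat4 a i j k) :
    x l - x k ≤ (a l : ℝ) - a k ∧ x k - x j ≤ (a k : ℝ) - a j ∧
      x j - x i ≤ (a j : ℝ) - a i ∧ x i - x l ≤ (a i : ℝ) - a l + 1 := by
  rw [flat4_eq_hull] at hx
  have hsub : convexHull ℝ ({proj4 (toE4 a), proj4 (toE4 a + ee4 i),
      proj4 (toE4 a + ee4 i + ee4 j), proj4 (toE4 a + ee4 i + ee4 j + ee4 k)} : Set E4) ⊆
      {x : E4 | x l - x k ≤ (a l : ℝ) - a k} ∩ ({x : E4 | x k - x j ≤ (a k : ℝ) - a j} ∩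
        ({x : E4 | x j - x i ≤ (a j : ℝ) - a i} ∩ {x : E4 | x i - x l ≤ (a i : ℝ) - a l + 1})) := by
    apply convexHull_min
    · rintro x (rfl | rfl | rfl | rfl) <;>
      · refine ⟨?_, ?_, ?_, ?_⟩ <;>
        · show proj4 _ _ - proj4 _ _ ≤ _
          rw [proj4_diff]
          simp [PiLp.add_apply, toE4, ee4_apply, hij, hik, hil, hjk, hjl, hkl,
            Ne.symm hij, Ne.symm hik, Ne.symm hil, Ne.symm hjk, Ne.symm hjl, Ne.symm hkl]
          try linarith
    · exact (convex_cd l k _).inter ((convex_cd k j _).inter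
        ((convex_cd j i _).inter (convex_cd i l _)))
  have := hsub hx
  exact ⟨this.1, this.2.1, this.2.2.1, this.2.2.2⟩

lemma strict_lt {s : Set E4} {y w : E4} (g : E4 →ₗ[ℝ] ℝ) {c : ℝ}
    (hy : y ∈ intrinsicInterior ℝ s) (hb : ∀ x ∈ s, g x ≤ c)
    (hw : w ∈ vectorSpan ℝ s) (hgw : 0 < g w) : g y < c := by
  rcases (hb y (intrinsicInterior_subset hy)).lt_or_eq with h | h
  · exact h
  exfalso
  obtain ⟨z, hz, hzy⟩ := hy
  have φmem : ∀ t : ℝ, (z : E4) + t • w ∈ affineSpan ℝ s := by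
    intro t
    have hw' : t • w ∈ (affineSpan ℝ s).direction := by
      rw [direction_affineSpan]; exact Submodule.smul_mem _ t hw
    have := AffineSubspace.vadd_mem_of_mem_direction hw' z.2
    simpa [vadd_eq_add, add_comm] using this
  set φ : ℝ → affineSpan ℝ s := fun t => ⟨(z : E4) + t • w, φmem t⟩ with hφdef
  have hcont : Continuous φ := by
    apply Continuous.subtype_mk
    fun_prop
  have hφ0 : φ 0 = z := by apply Subtype.ext; simp [hφdef]
  have hopen : IsOpen (φ ⁻¹' (interior ((↑) ⁻¹' s : Set (affineSpan ℝ s)))) :=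
    isOpen_interior.preimage hcont
  have h0 : (0:ℝ) ∈ φ ⁻¹' (interior ((↑) ⁻¹' s : Set (affineSpan ℝ s))) := by
    rw [Set.mem_preimage, hφ0]; exact hz
  obtain ⟨ε, hε, hball⟩ := Metric.isOpen_iff.1 hopen 0 h0
  have htm : (ε/2) ∈ Metric.ball (0:ℝ) ε := by
    simp only [Metric.mem_ball, Real.dist_eq, sub_zero]
    rw [abs_of_pos (half_pos hε)]
    linarith
  have ht : φ (ε/2) ∈ ((↑) ⁻¹' s : Set (affineSpan ℝ s)) := interior_subset (hball htm)
  have hmem : (z : E4) + (ε/2) • w ∈ s := ht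
  have hle := hb _ hmem
  rw [map_add, map_smul, smul_eq_mul] at hle
  have hzy' : g (z : E4) = c := by rw [hzy, h]
  nlinarith

def cdiff (m n : Fin 4) : E4 →ₗ[ℝ] ℝ where
  toFun v := v m - v n
  map_add' u v := by simp [PiLp.add_apply]; ring
  map_smul' t u := by simp [PiLp.smul_apply]; ring

lemma cdiff_apply (m n : Fin 4) (v : E4) : cdiff m n v = v m - v n := rfl

lemma vert_mem_flat4 (a : Fin 4 → ℤ) (i j k : Fin 4) (v : E4)
    (hv : v ∈ ({toE4 a, toE4 a + ee4 i, toE4 a + ee4 i + ee4 j,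
      toE4 a + ee4 i + ee4 j + ee4 k} : Set E4)) : proj4 v ∈ flat4 a i j k :=
  ⟨v, subset_convexHull ℝ _ hv, rfl⟩

lemma mem_intrinsic_strict {a : Fin 4 → ℤ} {i j k l : Fin 4}
    (hij : i ≠ j) (hik : i ≠ k) (hil : i ≠ l) (hjk : j ≠ k) (hjl : j ≠ l) (hkl : k ≠ l)
    {y : E4} (hy : y ∈ intrinsicInterior ℝ (flat4 a i j k)) :
    0 < y k - y l - (a k : ℝ) + (a l : ℝ) ∧
    y k - y l - (a k : ℝ) + (a l : ℝ) < y j - y l - (a j : ℝ) + (a l : ℝ) ∧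
    y j - y l - (a j : ℝ) + (a l : ℝ) < y i - y l - (a i : ℝ) + (a l : ℝ) ∧
    y i - y l - (a i : ℝ) + (a l : ℝ) < 1 := by
  have hP0 := vert_mem_flat4 a i j k (toE4 a) (by simp)
  have hP1 := vert_mem_flat4 a i j k (toE4 a + ee4 i) (by simp)
  have hP2 := vert_mem_flat4 a i j k (toE4 a + ee4 i + ee4 j) (by simp)
  have hP3 := vert_mem_flat4 a i j k (toE4 a + ee4 i + ee4 j + ee4 k) (by simp)
  have wmem : ∀ u v : E4, proj4 u ∈ flat4 a i j k → proj4 v ∈ flat4 a i j k →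
      proj4 u - proj4 v ∈ vectorSpan ℝ (flat4 a i j k) := by
    intro u v hu hv
    have := vsub_mem_vectorSpan ℝ hu hv
    simpa [vsub_eq_sub] using this
  have gval : ∀ m n : Fin 4, ∀ u v : E4,
      cdiff m n (proj4 u - proj4 v) = (u m - u n) - (v m - v n) := by
    intro m n u v
    rw [map_sub, cdiff_apply, cdiff_apply, proj4_diff, proj4_diff]
  have hyy : y ∈ flat4 a i j k := intrinsicInterior_subset hy
  have h1 : cdiff l k y < (a l : ℝ) - a k := by
    apply strict_lt (cdiff l k) hy
      (fun x hx => by rw [cdiff_apply]; exact (mem_flat4_ineq hij hik hil hjk hjl hkl hx).1)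
      (wmem _ _ hP0 hP3)
    rw [gval]
    simp [PiLp.add_apply, toE4, ee4_apply, hij, hik, hil, hjk, hjl, hkl,
      Ne.symm hij, Ne.symm hik, Ne.symm hil, Ne.symm hjk, Ne.symm hjl, Ne.symm hkl]
  have h2 : cdiff k j y < (a k : ℝ) - a j := by
    apply strict_lt (cdiff k j) hy
      (fun x hx => by rw [cdiff_apply]; exact (mem_flat4_ineq hij hik hil hjk hjl hkl hx).2.1)
      (wmem _ _ hP3 hP2)
    rw [gval]
    simp [PiLp.add_apply, toE4, ee4_apply, hij, hik, hil, hjk, hjl, hkl,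
      Ne.symm hij, Ne.symm hik, Ne.symm hil, Ne.symm hjk, Ne.symm hjl, Ne.symm hkl]
  have h3 : cdiff j i y < (a j : ℝ) - a i := by
    apply strict_lt (cdiff j i) hy
      (fun x hx => by rw [cdiff_apply]; exact (mem_flat4_ineq hij hik hil hjk hjl hkl hx).2.2.1)
      (wmem _ _ hP2 hP1)
    rw [gval]
    simp [PiLp.add_apply, toE4, ee4_apply, hij, hik, hil, hjk, hjl, hkl,
      Ne.symm hij, Ne.symm hik, Ne.symm hil, Ne.symm hjk, Ne.symm hjl, Ne.symm hkl]
  have h4 : cdiff i l y < (a i : ℝ) - a l + 1 := by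
    apply strict_lt (cdiff i l) hy
      (fun x hx => by rw [cdiff_apply]; exact (mem_flat4_ineq hij hik hil hjk hjl hkl hx).2.2.2)
      (wmem _ _ hP1 hP0)
    rw [gval]
    simp [PiLp.add_apply, toE4, ee4_apply, hij, hik, hil, hjk, hjl, hkl,
      Ne.symm hij, Ne.symm hik, Ne.symm hil, Ne.symm hjk, Ne.symm hjl, Ne.symm hkl]
  rw [cdiff_apply] at h1 h2 h3 h4
  refine ⟨by linarith, by linarith, by linarith, by linarith⟩

lemma fin4_cover : ∀ i j k l m : Fin 4, i≠j → i≠k → i≠l → j≠k → j≠l → k≠l →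
    (m = i ∨ m = j ∨ m = k ∨ m = l) := by decide

lemma fin4_fourth : ∀ i j k : Fin 4, i≠j → i≠k → j≠k → ∃ l, i≠l ∧ j≠l ∧ k≠l := by decide

lemma toE4_shift (a : Fin 4 → ℤ) (n : ℤ) :
    toE4 (fun m => a m + n) = toE4 a + (n : ℝ) • ones4 := by
  ext m
  have : (toE4 a + (n : ℝ) • ones4) m = toE4 a m + (n : ℝ) * ones4 m := rfl
  rw [this, ones4_apply]
  simp [toE4]

lemma flat4_shift (a : Fin 4 → ℤ) (n : ℤ) (i j k : Fin 4) :
    flat4 (fun m => a m + n) i j k = flat4 a i j k := by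
  rw [flat4_eq_hull, flat4_eq_hull, toE4_shift]
  have h0 : proj4 (toE4 a + (n:ℝ) • ones4) = proj4 (toE4 a) := proj4_shift _ _
  have h1 : proj4 (toE4 a + (n:ℝ) • ones4 + ee4 i) = proj4 (toE4 a + ee4 i) := by
    rw [show toE4 a + (n:ℝ) • ones4 + ee4 i = toE4 a + ee4 i + (n:ℝ) • ones4 by abel]
    exact proj4_shift _ _
  have h2 : proj4 (toE4 a + (n:ℝ) • ones4 + ee4 i + ee4 j) = proj4 (toE4 a + ee4 i + ee4 j) := by
    rw [show toE4 a + (n:ℝ) • ones4 + ee4 i + ee4 j = toE4 a + ee4 i + ee4 j + (n:ℝ) • ones4 by abel]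
    exact proj4_shift _ _
  have h3 : proj4 (toE4 a + (n:ℝ) • ones4 + ee4 i + ee4 j + ee4 k)
      = proj4 (toE4 a + ee4 i + ee4 j + ee4 k) := by
    rw [show toE4 a + (n:ℝ) • ones4 + ee4 i + ee4 j + ee4 k
        = toE4 a + ee4 i + ee4 j + ee4 k + (n:ℝ) • ones4 by abel]
    exact proj4_shift _ _
  rw [h0, h1, h2, h3]

lemma ones4_eq_sum {i j k l : Fin 4}
    (hij : i ≠ j) (hik : i ≠ k) (hil : i ≠ l) (hjk : j ≠ k) (hjl : j ≠ l) (hkl : k ≠ l) :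
    ee4 i + ee4 j + ee4 k + ee4 l = ones4 := by
  ext m
  have happ : (ee4 i + ee4 j + ee4 k + ee4 l) m
      = ee4 i m + ee4 j m + ee4 k m + ee4 l m := rfl
  rw [happ, ones4_apply, ee4_apply, ee4_apply, ee4_apply, ee4_apply]
  rcases fin4_cover i j k l m hij hik hil hjk hjl hkl with rfl | rfl | rfl | rfl <;>
    simp [hij, hik, hil, hjk, hjl, hkl,
      Ne.symm hij, Ne.symm hik, Ne.symm hil, Ne.symm hjk, Ne.symm hjl, Ne.symm hkl]

lemma flat4_rot {a : Fin 4 → ℤ} {i j k l : Fin 4}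
    (hij : i ≠ j) (hik : i ≠ k) (hil : i ≠ l) (hjk : j ≠ k) (hjl : j ≠ l) (hkl : k ≠ l) :
    flat4 a i j k = flat4 (fun m => a m - if m = l then 1 else 0) l i j := by
  have htb : toE4 (fun m => a m - if m = l then 1 else 0) = toE4 a - ee4 l := by
    ext m
    have : (toE4 a - ee4 l) m = toE4 a m - ee4 l m := rfl
    rw [this, ee4_apply]
    by_cases h : m = l <;> simp [toE4, h]
  rw [flat4_eq_hull, flat4_eq_hull, htb]
  have hW0 : proj4 (toE4 a - ee4 l) = proj4 (toE4 a + ee4 i + ee4 j + ee4 k) := by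
    have h : toE4 a - ee4 l = (toE4 a + ee4 i + ee4 j + ee4 k) + (-1 : ℝ) • ones4 := by
      rw [← ones4_eq_sum hij hik hil hjk hjl hkl]
      module
    rw [h, proj4_shift]
  have hW1 : toE4 a - ee4 l + ee4 l = toE4 a := by abel
  have hW2 : toE4 a - ee4 l + ee4 l + ee4 i = toE4 a + ee4 i := by abel
  have hW3 : toE4 a - ee4 l + ee4 l + ee4 i + ee4 j = toE4 a + ee4 i + ee4 j := by abel
  rw [hW0, hW1]
  congr 1
  ext x
  simp only [Set.mem_insert_iff, Set.mem_singleton_iff]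
  tauto

lemma core {a b : Fin 4 → ℤ} {i j k p q r l : Fin 4}
    (hij : i ≠ j) (hik : i ≠ k) (hil : i ≠ l) (hjk : j ≠ k) (hjl : j ≠ l) (hkl : k ≠ l)
    (hpq : p ≠ q) (hpr : p ≠ r) (hpl : p ≠ l) (hqr : q ≠ r) (hql : q ≠ l) (hrl : r ≠ l)
    {y : E4} (hy1 : y ∈ intrinsicInterior ℝ (flat4 a i j k))
    (hy2 : y ∈ intrinsicInterior ℝ (flat4 b p q r)) :
    flat4 a i j k = flat4 b p q r := by
  obtain ⟨d1, d2, d3, d4⟩ := mem_intrinsic_strict hij hik hil hjk hjl hkl hy1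
  obtain ⟨e1, e2, e3, e4⟩ := mem_intrinsic_strict hpq hpr hpl hqr hql hrl hy2
  have cover : ∀ m : Fin 4, m = i ∨ m = j ∨ m = k ∨ m = l :=
    fun m => fin4_cover i j k l m hij hik hil hjk hjl hkl
  have coverP : ∀ m : Fin 4, m = p ∨ m = q ∨ m = r ∨ m = l :=
    fun m => fin4_cover p q r l m hpq hpr hpl hqr hql hrl
  have hkey : ∀ m : Fin 4, m ≠ l →
      y m - y l - (a m : ℝ) + a l = y m - y l - (b m : ℝ) + b l := by
    intro m hm
    have hδ : 0 < y m - y l - (a m : ℝ) + a l ∧ y m - y l - (a m : ℝ) + a l < 1 := by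
      rcases cover m with rfl | rfl | rfl | rfl
      · exact ⟨by linarith, by linarith⟩
      · exact ⟨by linarith, by linarith⟩
      · exact ⟨by linarith, by linarith⟩
      · exact absurd rfl hm
    have hε : 0 < y m - y l - (b m : ℝ) + b l ∧ y m - y l - (b m : ℝ) + b l < 1 := by
      rcases coverP m with rfl | rfl | rfl | rfl
      · exact ⟨by linarith, by linarith⟩
      · exact ⟨by linarith, by linarith⟩
      · exact ⟨by linarith, by linarith⟩
      · exact absurd rfl hm
    have hz : (y m - y l - (a m : ℝ) + a l) - (y m - y l - (b m : ℝ) + b l)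
        = ((b m - b l - a m + a l : ℤ) : ℝ) := by push_cast; ring
    have hz0 : (b m - b l - a m + a l : ℤ) = 0 := by
      have h1 : ((b m - b l - a m + a l : ℤ) : ℝ) < 1 := by rw [← hz]; linarith [hδ.1, hδ.2, hε.1, hε.2]
      have h2 : (-1 : ℝ) < ((b m - b l - a m + a l : ℤ) : ℝ) := by rw [← hz]; linarith [hδ.1, hδ.2, hε.1, hε.2]
      have h1' : (b m - b l - a m + a l : ℤ) < 1 := by exact_mod_cast h1
      have h2' : (-1 : ℤ) < (b m - b l - a m + a l : ℤ) := by exact_mod_cast h2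
      omega
    have : (y m - y l - (a m : ℝ) + a l) - (y m - y l - (b m : ℝ) + b l) = 0 := by
      rw [hz, hz0]; norm_num
    linarith
  have hki := hkey i hil
  have hkj := hkey j hjl
  have hkk := hkey k hkl
  have hkp : p ≠ l → True := fun _ => trivial
  have hpi : p = i := by
    rcases cover p with h | rfl | rfl | h
    · exact h
    · -- p = j
      rcases coverP i with h' | rfl | rfl | h'
      · omega
      · linarith
      · linarith
      · omega
    · -- p = k
      rcases coverP i with h' | rfl | rfl | h'
      · omega
      · linarith
      · linarith
      · omega
    · omega
  subst hpi
  have hqj : q = j := by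
    rcases cover q with rfl | h | rfl | h
    · omega
    · exact h
    · -- q = k
      rcases coverP j with h' | rfl | rfl | h'
      · omega
      · omega
      · linarith
      · omega
    · omega
  subst hqj
  have hrk : r = k := by
    rcases cover r with rfl | rfl | h | h
    · omega
    · omega
    · exact h
    · omega
  subst hrk
  have hb : b = fun m => a m + (b l - a l) := by
    funext m
    by_cases hm : m = l
    · subst hm; ring
    · have := hkey m hm
      have hcast : (b m : ℝ) - a m = (b l : ℝ) - a l := by linarith
      have : b m - a m = b l - a l := by exact_mod_cast hcast
      omega
  rw [hb, flat4_shift]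

/-- distinct flat tetrahedrons have disjoint relative interiors
(interiors within the 3-dimensional hyperplane H). -/
theorem stmt12 (a b : Fin 4 → ℤ) (i j k p q r : Fin 4)
    (hij : i ≠ j) (hik : i ≠ k) (hjk : j ≠ k)
    (hpq : p ≠ q) (hpr : p ≠ r) (hqr : q ≠ r)
    (hne : flat4 a i j k ≠ flat4 b p q r) :
    Disjoint (intrinsicInterior ℝ (flat4 a i j k))
      (intrinsicInterior ℝ (flat4 b p q r)) := by
  by_contra hcon
  rw [Set.not_disjoint_iff] at hcon
  obtain ⟨y, hy1, hy2⟩ := hcon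
  obtain ⟨l, hil, hjl, hkl⟩ := fin4_fourth i j k hij hik hjk
  obtain ⟨l2, hpl2, hql2, hrl2⟩ := fin4_fourth p q r hpq hpr hqr
  apply hne
  have hrot1 := flat4_rot (a := a) hij hik hil hjk hjl hkl
  have hrot2 := flat4_rot (Ne.symm hil) (Ne.symm hjl) (Ne.symm hkl) hij hik hjk
    (a := fun m => a m - if m = l then 1 else 0)
  have hrot3 := flat4_rot hkl (Ne.symm hik) (Ne.symm hjk) (Ne.symm hil) (Ne.symm hjl) hij
    (a := fun m => (fun m => a m - if m = l then 1 else 0) m - if m = k then 1 else 0)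
  rcases fin4_cover i j k l l2 hij hik hil hjk hjl hkl with rfl | rfl | rfl | rfl
  · -- l2 = i : rotate three times
    rw [hrot1, hrot2, hrot3] at hy1 ⊢
    exact core hjk hjl (Ne.symm hij) hkl (Ne.symm hik) (Ne.symm hil)
      hpq hpr hpl2 hqr hql2 hrl2 hy1 hy2
  · -- l2 = j : rotate twice
    rw [hrot1, hrot2] at hy1 ⊢
    exact core hkl (Ne.symm hik) (Ne.symm hjk) (Ne.symm hil) (Ne.symm hjl) hij
      hpq hpr hpl2 hqr hql2 hrl2 hy1 hy2
  · -- l2 = k : rotate once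
    rw [hrot1] at hy1 ⊢
    exact core (Ne.symm hil) (Ne.symm hjl) (Ne.symm hkl) hij hik hjk
      hpq hpr hpl2 hqr hql2 hrl2 hy1 hy2
  · -- l2 = l
    exact core hij hik hil hjk hjl hkl hpq hpr hpl2 hqr hql2 hrl2 hy1 hy2
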